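/- For every integer n ≥ 0 and all sets T, B ⊆ [n], the number of permutations σ ∈ Av_n(231) with Destop(σ) = T and Desbot(σ) = B equals the number of permutations σ ∈ Av_n(312) with Destop(σ) = T and Desbot(σ) = B. (Equivalently, the patterns 231 and 312 are (Destop, Desbot)-Wilf equivalent.) -/

import Mathlib

open scoped Classical

/-- The 1-based `i`-th entry of a permutation `σ` of `{1,…,n}`, as a value in `{1,…,n}`
(one-line notation `σ(1)…σ(n)`). -/
def entry {n : ℕ} (σ : Equiv.Perm (Fin n)) (i : ℕ) : ℕ :=
  if h : i - 1 < n then (σ ⟨i - 1, h⟩ : ℕ) + 1 else 0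

/-- `σ` contains the pattern `π ∈ S_k` (given in 0-based one-line notation as a function):
there is a (not necessarily consecutive) subsequence of `σ` order-isomorphic to `π`. -/
def Contains {n k : ℕ} (π : Fin k → Fin k) (σ : Equiv.Perm (Fin n)) : Prop :=
  ∃ f : Fin k → Fin n, StrictMono f ∧ ∀ i j : Fin k, π i < π j ↔ σ (f i) < σ (f j)

/-- `σ` avoids the pattern `π`. -/
def AvoidsPat {n k : ℕ} (π : Fin k → Fin k) (σ : Equiv.Perm (Fin n)) : Prop :=
  ¬ Contains π σ

/-- The descent set of `σ` (1-based positions `i ∈ [n-1]` with `σ(i) > σ(i+1)`). -/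
def Des {n : ℕ} (σ : Equiv.Perm (Fin n)) : Finset ℕ :=
  (Finset.Icc 1 (n - 1)).filter (fun i => entry σ (i + 1) < entry σ i)

/-- The descent top set of `σ`: `{σ(i) : i ∈ Des σ}`. -/
def Destop {n : ℕ} (σ : Equiv.Perm (Fin n)) : Finset ℕ :=
  (Des σ).image (entry σ)

/-- The descent bottom set of `σ`: `{σ(i+1) : i ∈ Des σ}`. -/
def Desbot {n : ℕ} (σ : Equiv.Perm (Fin n)) : Finset ℕ :=
  (Des σ).image (fun i => entry σ (i + 1))

/-- The ascent set of `σ` (1-based positions `i ∈ [n-1]` with `σ(i) < σ(i+1)`). -/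
def Asc {n : ℕ} (σ : Equiv.Perm (Fin n)) : Finset ℕ :=
  (Finset.Icc 1 (n - 1)).filter (fun i => entry σ i < entry σ (i + 1))

/-- The ascent top set of `σ`: `{σ(i+1) : i ∈ Asc σ}`. -/
def Asctop {n : ℕ} (σ : Equiv.Perm (Fin n)) : Finset ℕ :=
  (Asc σ).image (fun i => entry σ (i + 1))

/-- The ascent bottom set of `σ`: `{σ(i) : i ∈ Asc σ}`. -/
def Ascbot {n : ℕ} (σ : Equiv.Perm (Fin n)) : Finset ℕ :=
  (Asc σ).image (entry σ)

/-- The set of peak values of `σ`. -/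
def Peak {n : ℕ} (σ : Equiv.Perm (Fin n)) : Finset ℕ :=
  Destop σ ∩ Asctop σ

/-- The set of valley values of `σ`. -/
def Val {n : ℕ} (σ : Equiv.Perm (Fin n)) : Finset ℕ :=
  Desbot σ ∩ Ascbot σ

/-- The set of left-to-right maxima (as values) of `σ`. -/
noncomputable def LRmax {n : ℕ} (σ : Equiv.Perm (Fin n)) : Finset ℕ :=
  ((Finset.Icc 1 n).filter (fun i => ∀ j, 1 ≤ j → j < i → entry σ j < entry σ i)).image (entry σ)

/-- The set of left-to-right minima (as values) of `σ`. -/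
noncomputable def LRmin {n : ℕ} (σ : Equiv.Perm (Fin n)) : Finset ℕ :=
  ((Finset.Icc 1 n).filter (fun i => ∀ j, 1 ≤ j → j < i → entry σ i < entry σ j)).image (entry σ)

/-- The set of right-to-left maxima (as values) of `σ`. -/
noncomputable def RLmax {n : ℕ} (σ : Equiv.Perm (Fin n)) : Finset ℕ :=
  ((Finset.Icc 1 n).filter (fun i => ∀ j, i < j → j ≤ n → entry σ j < entry σ i)).image (entry σ)

/-- The set of right-to-left minima (as values) of `σ`. -/
noncomputable def RLmin {n : ℕ} (σ : Equiv.Perm (Fin n)) : Finset ℕ :=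
  ((Finset.Icc 1 n).filter (fun i => ∀ j, i < j → j ≤ n → entry σ i < entry σ j)).image (entry σ)

/-- `(T, B)` is a descent matching: `T` and `B` are finite sets of positive integers
with `|T| = |B| = k`, and writing `T = {t_1 < … < t_k}`, `B = {b_1 < … < b_k}`,
we have `t_i > b_i` for all `i ∈ [k]`. -/
def DescentMatching (T B : Finset ℕ) : Prop :=
  T.card = B.card ∧ (∀ t ∈ T, 0 < t) ∧ (∀ b ∈ B, 0 < b) ∧
    ∀ i < T.card, (B.sort (· ≤ ·)).getD i 0 < (T.sort (· ≤ ·)).getD i 0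

/-- `(2_v 31)σ`: the number of occurrences of the vincular pattern `2-31` in `σ`
in which the "2" has value `v`. -/
def occ2_31at {n : ℕ} (σ : Equiv.Perm (Fin n)) (v : ℕ) : ℕ :=
  ((Finset.Icc 1 (n - 1) ×ˢ Finset.Icc 1 (n - 1)).filter
    (fun p => p.1 < p.2 ∧ entry σ (p.2 + 1) < entry σ p.2 ∧
      entry σ (p.2 + 1) < entry σ p.1 ∧ entry σ p.1 = v ∧ v < entry σ p.2)).card

/-- `(31 2_v)σ`: the number of occurrences of the vincular pattern `31-2` in `σ`
in which the "2" has value `v`. -/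
def occ31_2at {n : ℕ} (σ : Equiv.Perm (Fin n)) (v : ℕ) : ℕ :=
  ((Finset.Icc 1 (n - 1) ×ˢ Finset.Icc 1 n).filter
    (fun p => p.1 + 1 < p.2 ∧ entry σ (p.1 + 1) < entry σ p.1 ∧
      entry σ (p.1 + 1) < entry σ p.2 ∧ entry σ p.2 = v ∧ v < entry σ p.1)).card

/-- `(2-31)σ`: the number of occurrences of the vincular pattern `2-31` in `σ`. -/
def occ2_31 {n : ℕ} (σ : Equiv.Perm (Fin n)) : ℕ :=
  ((Finset.Icc 1 (n - 1) ×ˢ Finset.Icc 1 (n - 1)).filter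
    (fun p => p.1 < p.2 ∧ entry σ (p.2 + 1) < entry σ p.2 ∧
      entry σ (p.2 + 1) < entry σ p.1 ∧ entry σ p.1 < entry σ p.2)).card

/-- `(31-2)σ`: the number of occurrences of the vincular pattern `31-2` in `σ`. -/
def occ31_2 {n : ℕ} (σ : Equiv.Perm (Fin n)) : ℕ :=
  ((Finset.Icc 1 (n - 1) ×ˢ Finset.Icc 1 n).filter
    (fun p => p.1 + 1 < p.2 ∧ entry σ (p.1 + 1) < entry σ p.1 ∧
      entry σ (p.1 + 1) < entry σ p.2 ∧ entry σ p.2 < entry σ p.1)).card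

/-- The signature function `sg_{(T,B)}(i) = |B_{<i}| - |T_{≤i}| + 1`. -/
def sg (T B : Finset ℕ) (i : ℕ) : ℕ :=
  (B.filter (fun b => b < i)).card - (T.filter (fun t => t ≤ i)).card + 1

/-- The `(p,q)`-integer `[m]_{p,q} = Σ_{a+b=m-1} p^a q^b`. -/
def genQInt {R : Type*} [CommRing R] (m : ℕ) (p q : R) : R :=
  ∑ a ∈ Finset.range m, p ^ a * q ^ (m - 1 - a)

/-- The reverse complement of `σ`: `σ^{rc}(i) = n + 1 - σ(n + 1 - i)`. -/
def revComp {n : ℕ} (σ : Equiv.Perm (Fin n)) : Equiv.Perm (Fin n) :=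
  (Fin.revPerm.trans σ).trans Fin.revPerm

namespace DDW

variable {n : ℕ}

lemma entry_val (σ : Equiv.Perm (Fin n)) (j : Fin n) :
    entry σ (j.1 + 1) = (σ j : ℕ) + 1 := by
  simp [entry]

lemma mem_des (σ : Equiv.Perm (Fin n)) (i : ℕ) :
    i ∈ Des σ ↔ ∃ (j : Fin n) (h : j.1 + 1 < n),
      i = j.1 + 1 ∧ σ ⟨j.1 + 1, h⟩ < σ j := by
  constructor
  · intro hi
    rw [Des, Finset.mem_filter, Finset.mem_Icc] at hi
    obtain ⟨⟨h1, h2⟩, h3⟩ := hi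
    have hn : 1 ≤ n - 1 := le_trans h1 h2
    have hn2 : 2 ≤ n := by omega
    have hi1 : i - 1 < n := by omega
    have hi2 : i < n := by omega
    have hj : i - 1 + 1 < n := by omega
    refine ⟨⟨i - 1, hi1⟩, hj, by simp only [Fin.val_mk]; omega, ?_⟩
    have e1 : entry σ i = (σ ⟨i - 1, hi1⟩ : ℕ) + 1 := by
      have := entry_val σ ⟨i - 1, hi1⟩
      simpa [Nat.sub_add_cancel h1] using this
    have e2 : entry σ (i + 1) = (σ ⟨i, hi2⟩ : ℕ) + 1 := by
      have := entry_val σ ⟨i, hi2⟩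
      simpa using this
    have hfin : (⟨(⟨i - 1, hi1⟩ : Fin n).1 + 1, hj⟩ : Fin n) = ⟨i, hi2⟩ := by
      apply Fin.ext; simp; omega
    rw [e1, e2] at h3
    rw [hfin, Fin.lt_def]
    omega
  · rintro ⟨j, h, rfl, hlt⟩
    rw [Des, Finset.mem_filter, Finset.mem_Icc]
    refine ⟨⟨by omega, by omega⟩, ?_⟩
    have e1 : entry σ (j.1 + 1) = (σ j : ℕ) + 1 := entry_val σ j
    have e2 : entry σ (j.1 + 1 + 1) = (σ ⟨j.1 + 1, h⟩ : ℕ) + 1 := by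
      have := entry_val σ ⟨j.1 + 1, h⟩
      simpa using this
    rw [e1, e2]
    have := (Fin.lt_def).mp hlt
    omega

lemma mem_destop (σ : Equiv.Perm (Fin n)) (m : ℕ) :
    m ∈ Destop σ ↔ ∃ (j : Fin n) (h : j.1 + 1 < n),
      m = (σ j : ℕ) + 1 ∧ σ ⟨j.1 + 1, h⟩ < σ j := by
  rw [Destop, Finset.mem_image]
  constructor
  · rintro ⟨i, hi, rfl⟩
    obtain ⟨j, h, rfl, hlt⟩ := (mem_des σ i).mp hi
    exact ⟨j, h, (entry_val σ j), hlt⟩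
  · rintro ⟨j, h, rfl, hlt⟩
    exact ⟨j.1 + 1, (mem_des σ _).mpr ⟨j, h, rfl, hlt⟩, entry_val σ j⟩

lemma mem_desbot (σ : Equiv.Perm (Fin n)) (m : ℕ) :
    m ∈ Desbot σ ↔ ∃ (j : Fin n) (h : j.1 + 1 < n),
      m = (σ ⟨j.1 + 1, h⟩ : ℕ) + 1 ∧ σ ⟨j.1 + 1, h⟩ < σ j := by
  rw [Desbot, Finset.mem_image]
  constructor
  · rintro ⟨i, hi, rfl⟩
    obtain ⟨j, h, rfl, hlt⟩ := (mem_des σ i).mp hi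
    refine ⟨j, h, ?_, hlt⟩
    have := entry_val σ ⟨j.1 + 1, h⟩
    simpa using this
  · rintro ⟨j, h, rfl, hlt⟩
    refine ⟨j.1 + 1, (mem_des σ _).mpr ⟨j, h, rfl, hlt⟩, ?_⟩
    have := entry_val σ ⟨j.1 + 1, h⟩
    simpa using this

lemma contains231_iff (σ : Equiv.Perm (Fin n)) :
    Contains ![1, 2, 0] σ ↔
      ∃ x y z : Fin n, x < y ∧ y < z ∧ σ z < σ x ∧ σ x < σ y := by
  constructor
  · rintro ⟨f, hf, hiff⟩
    refine ⟨f 0, f 1, f 2, hf (by decide), hf (by decide), ?_, ?_⟩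
    · exact (hiff 2 0).mp (by decide)
    · exact (hiff 0 1).mp (by decide)
  · rintro ⟨x, y, z, hxy, hyz, h1, h2⟩
    have h3 : σ z < σ y := lt_trans h1 h2
    refine ⟨![x, y, z], ?_, ?_⟩
    · intro i j hij
      match i, j with
      | ⟨0,_⟩, ⟨0,_⟩ => exact absurd hij (by simp [Fin.lt_def])
      | ⟨0,_⟩, ⟨1,_⟩ => exact hxy
      | ⟨0,_⟩, ⟨2,_⟩ => exact lt_trans hxy hyz
      | ⟨1,_⟩, ⟨0,_⟩ => exact absurd hij (by simp [Fin.lt_def])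
      | ⟨1,_⟩, ⟨1,_⟩ => exact absurd hij (by simp [Fin.lt_def])
      | ⟨1,_⟩, ⟨2,_⟩ => exact hyz
      | ⟨2,_⟩, _ => exact absurd hij (by simp [Fin.lt_def]; omega)
    · intro i j
      match i, j with
      | ⟨0,_⟩, ⟨0,_⟩ => exact iff_of_false (show ¬ (1:Fin 3) < 1 by decide) (lt_irrefl _)
      | ⟨0,_⟩, ⟨1,_⟩ => exact iff_of_true (show (1:Fin 3) < 2 by decide) h2
      | ⟨0,_⟩, ⟨2,_⟩ => exact iff_of_false (show ¬ (1:Fin 3) < 0 by decide) (asymm h1)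
      | ⟨1,_⟩, ⟨0,_⟩ => exact iff_of_false (show ¬ (2:Fin 3) < 1 by decide) (asymm h2)
      | ⟨1,_⟩, ⟨1,_⟩ => exact iff_of_false (show ¬ (2:Fin 3) < 2 by decide) (lt_irrefl _)
      | ⟨1,_⟩, ⟨2,_⟩ => exact iff_of_false (show ¬ (2:Fin 3) < 0 by decide) (asymm h3)
      | ⟨2,_⟩, ⟨0,_⟩ => exact iff_of_true (show (0:Fin 3) < 1 by decide) h1
      | ⟨2,_⟩, ⟨1,_⟩ => exact iff_of_true (show (0:Fin 3) < 2 by decide) h3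
      | ⟨2,_⟩, ⟨2,_⟩ => exact iff_of_false (show ¬ (0:Fin 3) < 0 by decide) (lt_irrefl _)

lemma contains312_iff (σ : Equiv.Perm (Fin n)) :
    Contains ![2, 0, 1] σ ↔
      ∃ x y z : Fin n, x < y ∧ y < z ∧ σ y < σ z ∧ σ z < σ x := by
  constructor
  · rintro ⟨f, hf, hiff⟩
    refine ⟨f 0, f 1, f 2, hf (by decide), hf (by decide), ?_, ?_⟩
    · exact (hiff 1 2).mp (by decide)
    · exact (hiff 2 0).mp (by decide)
  · rintro ⟨x, y, z, hxy, hyz, h1, h2⟩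
    have h3 : σ y < σ x := lt_trans h1 h2
    refine ⟨![x, y, z], ?_, ?_⟩
    · intro i j hij
      match i, j with
      | ⟨0,_⟩, ⟨0,_⟩ => exact absurd hij (by simp [Fin.lt_def])
      | ⟨0,_⟩, ⟨1,_⟩ => exact hxy
      | ⟨0,_⟩, ⟨2,_⟩ => exact lt_trans hxy hyz
      | ⟨1,_⟩, ⟨0,_⟩ => exact absurd hij (by simp [Fin.lt_def])
      | ⟨1,_⟩, ⟨1,_⟩ => exact absurd hij (by simp [Fin.lt_def])
      | ⟨1,_⟩, ⟨2,_⟩ => exact hyz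
      | ⟨2,_⟩, _ => exact absurd hij (by simp [Fin.lt_def]; omega)
    · intro i j
      match i, j with
      | ⟨0,_⟩, ⟨0,_⟩ => exact iff_of_false (show ¬ (2:Fin 3) < 2 by decide) (lt_irrefl _)
      | ⟨0,_⟩, ⟨1,_⟩ => exact iff_of_false (show ¬ (2:Fin 3) < 0 by decide) (asymm h3)
      | ⟨0,_⟩, ⟨2,_⟩ => exact iff_of_false (show ¬ (2:Fin 3) < 1 by decide) (asymm h2)
      | ⟨1,_⟩, ⟨0,_⟩ => exact iff_of_true (show (0:Fin 3) < 2 by decide) h3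
      | ⟨1,_⟩, ⟨1,_⟩ => exact iff_of_false (show ¬ (0:Fin 3) < 0 by decide) (lt_irrefl _)
      | ⟨1,_⟩, ⟨2,_⟩ => exact iff_of_true (show (0:Fin 3) < 1 by decide) h1
      | ⟨2,_⟩, ⟨0,_⟩ => exact iff_of_true (show (1:Fin 3) < 2 by decide) h2
      | ⟨2,_⟩, ⟨1,_⟩ => exact iff_of_false (show ¬ (1:Fin 3) < 0 by decide) (asymm h1)
      | ⟨2,_⟩, ⟨2,_⟩ => exact iff_of_false (show ¬ (1:Fin 3) < 1 by decide) (lt_irrefl _)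

end DDW


namespace DDW

variable {n : ℕ}

def IsTop (σ : Equiv.Perm (Fin n)) (v : Fin n) : Prop :=
  ∃ (j : Fin n) (h : j.1 + 1 < n), σ j = v ∧ σ ⟨j.1 + 1, h⟩ < σ j

def IsBot (σ : Equiv.Perm (Fin n)) (v : Fin n) : Prop :=
  ∃ (j : Fin n) (h : j.1 + 1 < n), σ ⟨j.1 + 1, h⟩ = v ∧ σ ⟨j.1 + 1, h⟩ < σ j

lemma isTop_iff_mem (σ : Equiv.Perm (Fin n)) (v : Fin n) :
    IsTop σ v ↔ ((v : ℕ) + 1) ∈ Destop σ := by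
  rw [mem_destop]
  constructor
  · rintro ⟨j, h, he, hlt⟩
    exact ⟨j, h, by rw [he], hlt⟩
  · rintro ⟨j, h, hm, hlt⟩
    refine ⟨j, h, ?_, hlt⟩
    apply Fin.ext; omega

lemma isBot_iff_mem (σ : Equiv.Perm (Fin n)) (v : Fin n) :
    IsBot σ v ↔ ((v : ℕ) + 1) ∈ Desbot σ := by
  rw [mem_desbot]
  constructor
  · rintro ⟨j, h, he, hlt⟩
    exact ⟨j, h, by rw [he], hlt⟩
  · rintro ⟨j, h, hm, hlt⟩
    refine ⟨j, h, ?_, hlt⟩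
    apply Fin.ext; omega

lemma not231 {σ : Equiv.Perm (Fin n)} (hσ : AvoidsPat (![1,2,0] : Fin 3 → Fin 3) σ)
    {x y z : Fin n} (hxy : x < y) (hyz : y < z) (h1 : σ z < σ x) (h2 : σ x < σ y) : False :=
  hσ ((contains231_iff σ).mpr ⟨x, y, z, hxy, hyz, h1, h2⟩)

/-- In a 231-avoider, an ascent bottom is smaller than everything after it. -/
lemma rlmin {σ : Equiv.Perm (Fin n)} (hσ : AvoidsPat (![1,2,0] : Fin 3 → Fin 3) σ)
    {k : Fin n} (hk : k.1 + 1 < n) (ha : σ k < σ ⟨k.1 + 1, hk⟩)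
    {l : Fin n} (hl : k.1 + 1 ≤ l.1) : σ k < σ l := by
  rcases eq_or_lt_of_le hl with he | hlt
  · have : l = ⟨k.1 + 1, hk⟩ := Fin.ext he.symm
    rw [this]; exact ha
  · by_contra hc
    push_neg at hc
    have hne : σ l ≠ σ k := fun h => by
      have := σ.injective h
      rw [this] at hlt; omega
    have h1 : σ l < σ k := lt_of_le_of_ne hc hne
    exact not231 hσ (show k < (⟨k.1+1, hk⟩ : Fin n) from by simp [Fin.lt_def])
      (show (⟨k.1+1, hk⟩ : Fin n) < l from by simp [Fin.lt_def]; omega) h1 ha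

/-- Core: if `σ i` is not a descent top of `σ`, and values agree beyond `i`,
then `σ i ≤ τ i`. -/
lemma le_step {σ τ : Equiv.Perm (Fin n)}
    (hτ : AvoidsPat (![1,2,0] : Fin 3 → Fin 3) τ)
    (htop : ∀ v, IsTop σ v ↔ IsTop τ v)
    {i : Fin n} (IH : ∀ j : Fin n, i.1 < j.1 → σ j = τ j)
    (hnt : ¬ IsTop σ (σ i)) : σ i ≤ τ i := by
  set k := τ.symm (σ i) with hk
  have hki : τ k = σ i := τ.apply_symm_apply (σ i)
  rcases lt_trichotomy k.1 i.1 with h | h | h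
  · -- σ i appears later... earlier in τ; use rlmin of τ
    have hk1 : k.1 + 1 < n := by have := i.isLt; omega
    have hnt' : ¬ IsTop τ (τ k) := by rw [hki]; exact fun ht => hnt ((htop _).mpr ht)
    have hasc : τ k < τ ⟨k.1 + 1, hk1⟩ := by
      rcases lt_trichotomy (τ ⟨k.1 + 1, hk1⟩) (τ k) with hlt | heq | hgt
      · exact absurd ⟨k, hk1, rfl, hlt⟩ hnt'
      · exact absurd (τ.injective heq) (by intro hh; rw [Fin.ext_iff] at hh; simp at hh)
      · exact hgt
    have := rlmin hτ hk1 hasc (l := i) (by omega)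
    rw [hki] at this
    exact le_of_lt this
  · have : k = i := Fin.ext h
    rw [this] at hki; rw [hki]
  · exfalso
    have h3 : σ k = σ i := (IH k h).trans hki
    have : k = i := σ.injective h3
    rw [this] at h; omega

/-- Core: descent at `i` in both, agreement beyond `i` implies `σ i ≤ τ i`. -/
lemma desc_step_le {σ τ : Equiv.Perm (Fin n)}
    (hσ : AvoidsPat (![1,2,0] : Fin 3 → Fin 3) σ)
    {i : Fin n} (hi : i.1 + 1 < n) (IH : ∀ j : Fin n, i.1 < j.1 → σ j = τ j)
    (descσ : σ ⟨i.1 + 1, hi⟩ < σ i) (descτ : τ ⟨i.1 + 1, hi⟩ < τ i) : σ i ≤ τ i := by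
  set k := σ.symm (τ i) with hk
  have hki : σ k = τ i := σ.apply_symm_apply (τ i)
  have hwa : σ ⟨i.1 + 1, hi⟩ = τ ⟨i.1 + 1, hi⟩ := IH _ (by simp)
  rcases lt_trichotomy k.1 i.1 with h | h | h
  · -- 231 at (k, i, i+1) unless σ i < σ k
    have h1 : σ ⟨i.1 + 1, hi⟩ < σ k := by rw [hki, hwa]; exact descτ
    rcases lt_trichotomy (σ k) (σ i) with hlt | heq | hgt
    · exact absurd (not231 hσ (show k < i from by rw [Fin.lt_def]; exact h)
        (show i < (⟨i.1+1, hi⟩ : Fin n) from by simp [Fin.lt_def]) h1 hlt) (fun f => f)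
    · have := σ.injective heq; rw [this] at h; omega
    · rw [hki] at hgt; exact le_of_lt hgt
  · have : k = i := Fin.ext h
    rw [this] at hki; rw [hki]
  · exfalso
    have h2 := IH k h
    rw [h2] at hki
    have : k = i := τ.injective hki
    rw [this] at h; omega

theorem uniq231' (σ τ : Equiv.Perm (Fin n)) (hσ : AvoidsPat (![1,2,0] : Fin 3 → Fin 3) σ)
    (hτ : AvoidsPat (![1,2,0] : Fin 3 → Fin 3) τ) (ht : Destop σ = Destop τ)
    (hb : Desbot σ = Desbot τ) : σ = τ := by
  have htop : ∀ v, IsTop σ v ↔ IsTop τ v := fun v =>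
    (isTop_iff_mem σ v).trans (ht ▸ (isTop_iff_mem τ v).symm)
  have hbot : ∀ v, IsBot σ v ↔ IsBot τ v := fun v =>
    (isBot_iff_mem σ v).trans (hb ▸ (isBot_iff_mem τ v).symm)
  have htop' : ∀ v, IsTop τ v ↔ IsTop σ v := fun v => (htop v).symm
  have step : ∀ i : Fin n, (∀ j : Fin n, i.1 < j.1 → σ j = τ j) → σ i = τ i := by
    intro i IH
    have IH' : ∀ j : Fin n, i.1 < j.1 → τ j = σ j := fun j hj => (IH j hj).symm
    by_cases hlast : i.1 + 1 < n
    · set w := σ ⟨i.1 + 1, hlast⟩ with hwdef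
      have hw : τ ⟨i.1 + 1, hlast⟩ = w := (IH _ (by simp)).symm
      by_cases hbotw : IsBot σ w
      · -- descent at i in both
        have descσ : σ ⟨i.1 + 1, hlast⟩ < σ i := by
          obtain ⟨j, h, he, hlt⟩ := hbotw
          have : (⟨j.1+1, h⟩ : Fin n) = ⟨i.1+1, hlast⟩ := σ.injective (he.trans hwdef)
          rw [Fin.mk.injEq] at this
          have hji : j = i := Fin.ext (by omega)
          subst hji
          convert hlt using 2
        have descτ : τ ⟨i.1 + 1, hlast⟩ < τ i := by
          obtain ⟨j, h, he, hlt⟩ := (hbot w).mp hbotw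
          have : (⟨j.1+1, h⟩ : Fin n) = ⟨i.1+1, hlast⟩ := τ.injective (he.trans hw.symm)
          rw [Fin.mk.injEq] at this
          have hji : j = i := Fin.ext (by omega)
          subst hji
          convert hlt using 2
        exact le_antisymm (desc_step_le hσ hlast IH descσ descτ)
          (desc_step_le hτ hlast IH' descτ descσ)
      · -- ascent at i in both
        have ascσ : σ i < σ ⟨i.1 + 1, hlast⟩ := by
          rcases lt_trichotomy (σ ⟨i.1 + 1, hlast⟩) (σ i) with hlt | heq | hgt
          · exact absurd ⟨i, hlast, rfl, hlt⟩ hbotw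
          · have := σ.injective heq
            rw [Fin.ext_iff] at this; simp at this
          · exact hgt
        have hnt : ¬ IsTop σ (σ i) := by
          rintro ⟨j, h, he, hlt⟩
          have hji : j = i := σ.injective he
          subst hji
          have : σ ⟨j.1+1, h⟩ = σ ⟨j.1+1, hlast⟩ := rfl
          rw [this] at hlt
          exact absurd ascσ (not_lt.mpr (le_of_lt hlt))
        have hnt' : ¬ IsTop τ (τ i) := by
          rintro ⟨j, h, he, hlt⟩
          have hji : j = i := τ.injective he
          subst hji
          have hb2 : IsBot τ (τ ⟨j.1+1, h⟩) := ⟨j, h, rfl, hlt⟩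
          have hb3 : IsBot σ (τ ⟨j.1+1, h⟩) := (hbot _).mpr hb2
          have : τ ⟨j.1+1, h⟩ = w := by
            have : (⟨j.1+1, h⟩ : Fin n) = ⟨j.1+1, hlast⟩ := rfl
            rw [this, hw]
          rw [this] at hb3
          exact hbotw hb3
        exact le_antisymm (le_step hτ htop IH hnt) (le_step hσ htop' IH' hnt')
    · -- i is the last position
      have hnt : ¬ IsTop σ (σ i) := by
        rintro ⟨j, h, he, hlt⟩
        have hji : j = i := σ.injective he
        subst hji
        exact hlast h
      have hnt' : ¬ IsTop τ (τ i) := by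
        rintro ⟨j, h, he, hlt⟩
        have hji : j = i := τ.injective he
        subst hji
        exact hlast h
      exact le_antisymm (le_step hτ htop IH hnt) (le_step hσ htop' IH' hnt')
  have key : ∀ m : ℕ, ∀ i : Fin n, n - i.1 ≤ m → σ i = τ i := by
    intro m
    induction m with
    | zero => intro i hi; exact absurd hi (by have := i.isLt; omega)
    | succ m ih =>
      intro i hi
      apply step
      intro j hj
      exact ih j (by have := j.isLt; omega)
  exact Equiv.ext (fun i => key n i (by omega))

end DDW


namespace DDW

variable {n : ℕ}

def ascStart (σ : Equiv.Perm (Fin n)) (i : Fin n) : Prop :=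
  i.1 = 0 ∨ ∃ h : i.1 - 1 < n, σ ⟨i.1 - 1, h⟩ < σ i

noncomputable def rsSet (σ : Equiv.Perm (Fin n)) (j : Fin n) : Finset (Fin n) :=
  Finset.univ.filter (fun i => i ≤ j ∧ ascStart σ i)

lemma rsSet_nonempty (σ : Equiv.Perm (Fin n)) (j : Fin n) : (rsSet σ j).Nonempty :=
  ⟨⟨0, lt_of_le_of_lt (Nat.zero_le _) j.isLt⟩, by
    simp only [rsSet, Finset.mem_filter, Finset.mem_univ, true_and]
    exact ⟨by simp [Fin.le_def], Or.inl rfl⟩⟩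

noncomputable def rs (σ : Equiv.Perm (Fin n)) (j : Fin n) : Fin n :=
  (rsSet σ j).max' (rsSet_nonempty σ j)

lemma rs_mem (σ : Equiv.Perm (Fin n)) (j : Fin n) : rs σ j ∈ rsSet σ j :=
  Finset.max'_mem _ _

lemma rs_le (σ : Equiv.Perm (Fin n)) (j : Fin n) : rs σ j ≤ j :=
  ((Finset.mem_filter.mp (rs_mem σ j)).2).1

lemma rs_ascStart (σ : Equiv.Perm (Fin n)) (j : Fin n) : ascStart σ (rs σ j) :=
  ((Finset.mem_filter.mp (rs_mem σ j)).2).2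

lemma le_rs (σ : Equiv.Perm (Fin n)) {i j : Fin n} (h1 : i ≤ j) (h2 : ascStart σ i) :
    i ≤ rs σ j :=
  Finset.le_max' _ _ (Finset.mem_filter.mpr ⟨Finset.mem_univ _, h1, h2⟩)

lemma descent_in_run (σ : Equiv.Perm (Fin n)) {j i : Fin n}
    (h2 : rs σ j ≤ i) (hi1 : i.1 + 1 < n) (h3 : i.1 + 1 ≤ j.1) :
    σ ⟨i.1 + 1, hi1⟩ < σ i := by
  have hni : ¬ ascStart σ ⟨i.1 + 1, hi1⟩ := by
    intro hA
    have := le_rs σ (i := ⟨i.1 + 1, hi1⟩) (j := j) (by rw [Fin.le_def]; exact h3) hA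
    rw [Fin.le_def] at this h2
    simp only [Fin.val_mk] at this
    omega
  rw [ascStart] at hni
  push_neg at hni
  obtain ⟨h0, hns⟩ := hni
  have hlt := hns (by omega)
  have hmk : (⟨(⟨i.1+1, hi1⟩ : Fin n).1 - 1, by omega⟩ : Fin n) = i := Fin.ext (by simp)
  rw [hmk] at hlt
  rcases lt_trichotomy (σ ⟨i.1 + 1, hi1⟩) (σ i) with h | h | h
  · exact h
  · exfalso
    have := σ.injective h
    rw [Fin.ext_iff] at this
    simp at this
  · exact absurd h (not_lt.mpr hlt)

lemma run_value_le (σ : Equiv.Perm (Fin n)) {j i : Fin n}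
    (h1 : rs σ j ≤ i) (h2 : i ≤ j) : σ j ≤ σ i := by
  have key : ∀ d : ℕ, ∀ i : Fin n, rs σ j ≤ i → i ≤ j → j.1 - i.1 = d → σ j ≤ σ i := by
    intro d
    induction d with
    | zero =>
      intro i hi1 hi2 hd
      have : i = j := Fin.ext (by rw [Fin.le_def] at hi2; omega)
      rw [this]
    | succ d ih =>
      intro i hi1 hi2 hd
      rw [Fin.le_def] at hi1 hi2
      have hi3 : i.1 + 1 < n := by have := j.isLt; omega
      have hstep := descent_in_run σ (by rw [Fin.le_def]; exact hi1) hi3 (by omega)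
      have hrec := ih ⟨i.1 + 1, hi3⟩ (by rw [Fin.le_def]; simp; omega)
        (by rw [Fin.le_def]; simp; omega) (by simp; omega)
      exact le_trans hrec (le_of_lt hstep)
  exact key (j.1 - i.1) i h1 h2 rfl

lemma rs_between (σ : Equiv.Perm (Fin n)) {i j : Fin n}
    (h1 : rs σ j ≤ i) (h2 : i ≤ j) : rs σ i = rs σ j :=
  le_antisymm (le_rs σ ((rs_le σ i).trans h2) (rs_ascStart σ i)) (le_rs σ h1 (rs_ascStart σ j))

lemma rs_eq_self (σ : Equiv.Perm (Fin n)) {j : Fin n} (h : ascStart σ j) : rs σ j = j :=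
  le_antisymm (rs_le σ j) (le_rs σ le_rfl h)

lemma rs_idem (σ : Equiv.Perm (Fin n)) (j : Fin n) : rs σ (rs σ j) = rs σ j :=
  rs_eq_self σ (rs_ascStart σ j)

lemma rs_desc_succ (σ : Equiv.Perm (Fin n)) {i : Fin n} (hi1 : i.1 + 1 < n)
    (hd : σ ⟨i.1 + 1, hi1⟩ < σ i) : rs σ ⟨i.1 + 1, hi1⟩ = rs σ i := by
  apply le_antisymm
  · have hna : ¬ ascStart σ ⟨i.1 + 1, hi1⟩ := by
      rintro (h0 | ⟨h, hlt⟩)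
      · simp at h0
      · have hmk : (⟨(⟨i.1+1, hi1⟩ : Fin n).1 - 1, h⟩ : Fin n) = i := Fin.ext (by simp)
        rw [hmk] at hlt
        exact absurd hd (asymm hlt)
    have h1 : rs σ ⟨i.1 + 1, hi1⟩ ≤ ⟨i.1 + 1, hi1⟩ := rs_le σ _
    have h2 : rs σ ⟨i.1 + 1, hi1⟩ ≠ ⟨i.1 + 1, hi1⟩ := fun h => hna (h ▸ rs_ascStart σ _)
    have h3 : rs σ ⟨i.1 + 1, hi1⟩ ≤ i := by
      have h2' : (rs σ ⟨i.1 + 1, hi1⟩).1 ≠ i.1 + 1 := by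
        intro hh
        exact h2 (Fin.ext hh)
      rw [Fin.le_def] at h1 ⊢
      simp only [Fin.val_mk] at h1
      omega
    exact le_rs σ h3 (rs_ascStart σ _)
  · refine le_rs σ ?_ (rs_ascStart σ i)
    have := rs_le σ i
    rw [Fin.le_def] at this ⊢
    simp only [Fin.val_mk]
    omega

noncomputable def Mx (σ : Equiv.Perm (Fin n)) (j : Fin n) : Fin n := σ (rs σ j)

noncomputable def key (σ : Equiv.Perm (Fin n)) (j : Fin n) : ℕ := (Mx σ j).1 * n + j.1

lemma key_lt_of_M_lt (σ : Equiv.Perm (Fin n)) {i j : Fin n} (h : Mx σ i < Mx σ j) :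
    key σ i < key σ j := by
  have h1 : (Mx σ i).1 + 1 ≤ (Mx σ j).1 := h
  have h2 := i.isLt
  calc key σ i = (Mx σ i).1 * n + i.1 := rfl
    _ < ((Mx σ i).1 + 1) * n := by rw [add_mul, one_mul]; omega
    _ ≤ (Mx σ j).1 * n := Nat.mul_le_mul_right n h1
    _ ≤ key σ j := Nat.le_add_right _ _

lemma M_le_of_key_lt (σ : Equiv.Perm (Fin n)) {i j : Fin n} (h : key σ i < key σ j) :
    Mx σ i ≤ Mx σ j := by
  by_contra hc
  push_neg at hc
  exact absurd h (not_lt.mpr (le_of_lt (key_lt_of_M_lt σ hc)))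

lemma val_lt_of_key_lt (σ : Equiv.Perm (Fin n)) {i j : Fin n} (h : key σ i < key σ j)
    (hM : Mx σ i = Mx σ j) : i.1 < j.1 := by
  have : (Mx σ i).1 = (Mx σ j).1 := by rw [hM]
  rw [key, key, this] at h
  omega

lemma key_lt_of_M_eq (σ : Equiv.Perm (Fin n)) {i j : Fin n} (hM : Mx σ i = Mx σ j)
    (h : i.1 < j.1) : key σ i < key σ j := by
  have : (Mx σ i).1 = (Mx σ j).1 := by rw [hM]
  rw [key, key, this]
  omega

lemma key_inj (σ : Equiv.Perm (Fin n)) : Function.Injective (key σ) := by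
  intro i j h
  have hM : Mx σ i = Mx σ j := by
    rcases lt_trichotomy (Mx σ i) (Mx σ j) with hc | hc | hc
    · exact absurd h (ne_of_lt (key_lt_of_M_lt σ hc))
    · exact hc
    · exact absurd h.symm (ne_of_lt (key_lt_of_M_lt σ hc))
  have : (Mx σ i).1 = (Mx σ j).1 := by rw [hM]
  rw [key, key, this] at h
  exact Fin.ext (by omega)

end DDW


namespace DDW

variable {n : ℕ}

noncomputable def srt (σ : Equiv.Perm (Fin n)) : Equiv.Perm (Fin n) :=
  Tuple.sort (key σ)

noncomputable def phi (σ : Equiv.Perm (Fin n)) : Equiv.Perm (Fin n) :=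
  (srt σ).trans σ

lemma phi_apply (σ : Equiv.Perm (Fin n)) (i : Fin n) : phi σ i = σ (srt σ i) := rfl

lemma km (σ : Equiv.Perm (Fin n)) : StrictMono (fun i => key σ (srt σ i)) := by
  have h1 : Monotone (key σ ∘ (srt σ)) := Tuple.monotone_sort (key σ)
  exact h1.strictMono_of_injective ((key_inj σ).comp (srt σ).injective)

lemma no_between (σ : Equiv.Perm (Fin n)) {i : Fin n} (hi : i.1 + 1 < n) (c : Fin n)
    (h1 : key σ (srt σ i) < key σ c) (h2 : key σ c < key σ (srt σ ⟨i.1 + 1, hi⟩)) : False := by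
  set m := (srt σ).symm c with hm
  have hc : srt σ m = c := (srt σ).apply_symm_apply c
  rw [← hc] at h1 h2
  have ha : i < m := (km σ).lt_iff_lt.mp h1
  have hb : m < ⟨i.1 + 1, hi⟩ := (km σ).lt_iff_lt.mp h2
  rw [Fin.lt_def] at ha hb
  simp only [Fin.val_mk] at hb
  omega

lemma adj_cases (σ : Equiv.Perm (Fin n)) (i : Fin n) (hi : i.1 + 1 < n) :
    (∃ h : (srt σ i).1 + 1 < n, srt σ ⟨i.1 + 1, hi⟩ = ⟨(srt σ i).1 + 1, h⟩ ∧
      σ (srt σ ⟨i.1 + 1, hi⟩) < σ (srt σ i)) ∨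
    σ (srt σ i) < σ (srt σ ⟨i.1 + 1, hi⟩) := by
  set x := srt σ i with hx
  set y := srt σ ⟨i.1 + 1, hi⟩ with hy
  have hk : key σ x < key σ y := (km σ) (by rw [Fin.lt_def]; simp)
  by_cases hM : Mx σ x = Mx σ y
  · left
    have hxy : x.1 < y.1 := val_lt_of_key_lt σ hk hM
    have hrseq : rs σ x = rs σ y := σ.injective hM
    have hsucc : y.1 = x.1 + 1 := by
      by_contra hc
      have hxy2 : x.1 + 1 < y.1 := by omega
      have hcn : x.1 + 1 < n := lt_trans hxy2 y.isLt
      set c : Fin n := ⟨x.1 + 1, hcn⟩ with hcdef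
      have hrsc : rs σ c = rs σ y := by
        apply rs_between σ
        · have := rs_le σ x
          rw [Fin.le_def] at this ⊢
          rw [← hrseq]
          simp only [hcdef, Fin.val_mk]
          omega
        · rw [Fin.le_def]; simp only [hcdef, Fin.val_mk]; omega
      have hMc : Mx σ c = Mx σ x := by
        rw [Mx, Mx, hrsc, hrseq]
      exact no_between σ hi c (key_lt_of_M_eq σ hMc.symm (by rw [hcdef]; exact Nat.lt_succ_self _))
        (key_lt_of_M_eq σ (hMc.trans hM) (by simp; omega))
    have h : x.1 + 1 < n := hsucc ▸ y.isLt
    have hyx : y = ⟨x.1 + 1, h⟩ := Fin.ext hsucc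
    refine ⟨h, hyx, ?_⟩
    have hdesc : σ ⟨x.1 + 1, h⟩ < σ x := by
      apply descent_in_run σ (j := y)
      · rw [← hrseq]; exact rs_le σ x
      · omega
    rw [hyx]
    exact hdesc
  · right
    have hMlt : Mx σ x < Mx σ y := lt_of_le_of_ne (M_le_of_key_lt σ hk) hM
    have hyrs : rs σ y = y := by
      by_contra hc
      set c := rs σ y with hcdef
      have hc1 : c.1 < y.1 := by
        have h1 := rs_le σ y
        rw [Fin.le_def] at h1
        have : c.1 ≠ y.1 := fun hh => hc (Fin.ext hh)
        omega
      have hMc : Mx σ c = Mx σ y := by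
        rw [Mx, Mx, hcdef, rs_idem σ y]
      exact no_between σ hi c (key_lt_of_M_lt σ (hMc.symm ▸ hMlt))
        (key_lt_of_M_eq σ hMc hc1)
    have h1 : σ x ≤ Mx σ x := run_value_le σ (le_refl _)  (rs_le σ x)
    have h2 : σ y = Mx σ y := by rw [Mx, hyrs]
    calc σ x ≤ Mx σ x := h1
      _ < Mx σ y := hMlt
      _ = σ y := h2.symm

lemma desc_lift (σ : Equiv.Perm (Fin n)) {a : Fin n} (ha : a.1 + 1 < n)
    (hd : σ ⟨a.1 + 1, ha⟩ < σ a) :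
    ∃ (i : Fin n) (hi : i.1 + 1 < n),
      srt σ i = a ∧ srt σ ⟨i.1 + 1, hi⟩ = ⟨a.1 + 1, ha⟩ := by
  set p := (srt σ).symm a with hp
  set q := (srt σ).symm ⟨a.1 + 1, ha⟩ with hq
  have hpa : srt σ p = a := (srt σ).apply_symm_apply a
  have hqa : srt σ q = ⟨a.1 + 1, ha⟩ := (srt σ).apply_symm_apply _
  have hMeq : Mx σ (⟨a.1 + 1, ha⟩ : Fin n) = Mx σ a := by
    rw [Mx, Mx, rs_desc_succ σ ha hd]
  have hkey : key σ (⟨a.1 + 1, ha⟩ : Fin n) = key σ a + 1 := by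
    rw [key, key]
    have : (Mx σ (⟨a.1 + 1, ha⟩ : Fin n)).1 = (Mx σ a).1 := by rw [hMeq]
    rw [this]
    simp only [Fin.val_mk]
    omega
  have hpq : p < q := by
    have hh : key σ (srt σ p) < key σ (srt σ q) := by
      rw [hpa, hqa, hkey]
      omega
    exact (km σ).lt_iff_lt.mp hh
  have hq1 : q.1 = p.1 + 1 := by
    by_contra hc
    rw [Fin.lt_def] at hpq
    have hc2 : p.1 + 1 < q.1 := by omega
    have hcn : p.1 + 1 < n := lt_trans hc2 q.isLt
    have h1 : key σ (srt σ p) < key σ (srt σ ⟨p.1 + 1, hcn⟩) :=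
      (km σ) (by rw [Fin.lt_def]; simp)
    have h2 : key σ (srt σ ⟨p.1 + 1, hcn⟩) < key σ (srt σ q) :=
      (km σ) (by rw [Fin.lt_def]; simp; omega)
    rw [hpa] at h1
    rw [hqa, hkey] at h2
    omega
  have hpn : p.1 + 1 < n := hq1 ▸ q.isLt
  refine ⟨p, hpn, hpa, ?_⟩
  have : (⟨p.1 + 1, hpn⟩ : Fin n) = q := Fin.ext hq1.symm
  rw [this, hqa]

lemma destop_phi (σ : Equiv.Perm (Fin n)) : Destop (phi σ) = Destop σ := by
  ext m
  rw [mem_destop, mem_destop]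
  constructor
  · rintro ⟨j, h, rfl, hlt⟩
    rcases adj_cases σ j h with ⟨h', hy, hdesc⟩ | hasc
    · refine ⟨srt σ j, h', rfl, ?_⟩
      rw [phi_apply, phi_apply] at hlt
      rw [← hy]
      exact hlt
    · rw [phi_apply, phi_apply] at hlt
      exact absurd hasc (not_lt.mpr (le_of_lt hlt))
  · rintro ⟨j, h, rfl, hlt⟩
    obtain ⟨i, hi, hia, hib⟩ := desc_lift σ h hlt
    refine ⟨i, hi, by rw [phi_apply, hia], ?_⟩
    rw [phi_apply, phi_apply, hia, hib]
    exact hlt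

lemma desbot_phi (σ : Equiv.Perm (Fin n)) : Desbot (phi σ) = Desbot σ := by
  ext m
  rw [mem_desbot, mem_desbot]
  constructor
  · rintro ⟨j, h, rfl, hlt⟩
    rcases adj_cases σ j h with ⟨h', hy, hdesc⟩ | hasc
    · refine ⟨srt σ j, h', ?_, ?_⟩
      · rw [phi_apply, ← hy]
      · rw [← hy]; exact hdesc
    · rw [phi_apply, phi_apply] at hlt
      exact absurd hasc (not_lt.mpr (le_of_lt hlt))
  · rintro ⟨j, h, rfl, hlt⟩
    obtain ⟨i, hi, hia, hib⟩ := desc_lift σ h hlt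
    refine ⟨i, hi, ?_, ?_⟩
    · rw [phi_apply, hib]
    · rw [phi_apply, phi_apply, hia, hib]
      exact hlt

lemma phi_avoids (σ : Equiv.Perm (Fin n)) (hσ : AvoidsPat (![1,2,0] : Fin 3 → Fin 3) σ) :
    AvoidsPat (![2,0,1] : Fin 3 → Fin 3) (phi σ) := by
  intro hc
  rw [contains312_iff] at hc
  obtain ⟨p, q, r, hpq, hqr, h1, h2⟩ := hc
  try simp only [phi_apply] at h1 h2
  set a := srt σ p with hadef
  set b := srt σ q with hbdef
  set c := srt σ r with hcdef
  -- values : σ b < σ c < σ a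
  have hkab : key σ a < key σ b := (km σ) hpq
  have hkbc : key σ b < key σ c := (km σ) hqr
  have hMab : Mx σ a ≤ Mx σ b := M_le_of_key_lt σ hkab
  have hMbc : Mx σ b ≤ Mx σ c := M_le_of_key_lt σ hkbc
  -- step 1 : Mx b < Mx c
  have hMbc' : Mx σ b < Mx σ c := by
    rcases lt_or_eq_of_le hMbc with h | h
    · exact h
    · exfalso
      have hrs : rs σ b = rs σ c := σ.injective h
      have hbc : b.1 < c.1 := val_lt_of_key_lt σ hkbc h
      have : σ c ≤ σ b := by
        apply run_value_le σ (i := b) (j := c)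
        · rw [← hrs]; exact rs_le σ b
        · rw [Fin.le_def]; omega
      exact absurd h1 (not_lt.mpr this)
  have hZMa : σ a ≤ Mx σ a := run_value_le σ (le_refl _) (rs_le σ a)
  have hZMb : σ a ≤ Mx σ b := le_trans hZMa hMab
  -- Fin value versions for omega use
  rw [Fin.lt_def] at h1 h2 hMbc'
  rw [Fin.le_def] at hZMb
  rcases lt_trichotomy a (rs σ c) with hasc | hasc | hasc
  · -- a before run start of c
    have hscc : (rs σ c).1 < c.1 := by
      have hle := rs_le σ c
      rw [Fin.le_def] at hle
      rcases lt_or_eq_of_le hle with h | h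
      · exact h
      · exfalso
        have : rs σ c = c := Fin.ext h
        have hYM : σ c = Mx σ c := by rw [Mx, this]
        rw [hYM] at h2 h1
        omega
    exact not231 hσ hasc (by rw [Fin.lt_def]; exact hscc)
      (show σ c < σ a from by rw [Fin.lt_def]; omega)
      (show σ a < σ (rs σ c) from by
        have e : σ (rs σ c) = Mx σ c := rfl
        rw [Fin.lt_def, e]; omega)
  · -- a = rs c : contradiction since σ a small
    have : σ a = Mx σ c := by rw [Mx, ← hasc]
    rw [this] at hZMb
    omega
  · -- rs c < a
    by_cases hbsc : (rs σ c) ≤ b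
    · -- sc ≤ b
      have hscb : (rs σ c).1 < b.1 := by
        rw [Fin.le_def] at hbsc
        rcases lt_or_eq_of_le hbsc with h | h
        · exact h
        · exfalso
          have : rs σ c = b := Fin.ext h
          have : σ b = Mx σ c := by rw [Mx, ← this]
          rw [this] at h1
          omega
      have hscsb : rs σ c ≤ rs σ b := le_rs σ hbsc (rs_ascStart σ c)
      have hscsb' : rs σ c ≠ rs σ b := by
        intro hh
        have : Mx σ c = Mx σ b := by rw [Mx, Mx, hh]
        rw [this] at hMbc'
        omega
      have hcsb : c.1 < (rs σ b).1 := by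
        by_contra hcc
        push_neg at hcc
        have := le_rs σ (i := rs σ b) (j := c) (by rw [Fin.le_def]; exact hcc) (rs_ascStart σ b)
        have h5 : rs σ c = rs σ b := le_antisymm hscsb this
        exact hscsb' h5
      have hsbb : (rs σ b).1 < b.1 := by
        have hle := rs_le σ b
        rw [Fin.le_def] at hle
        rcases lt_or_eq_of_le hle with h | h
        · exact h
        · exfalso
          have : rs σ b = b := Fin.ext h
          have : σ b = Mx σ b := by rw [Mx, this]
          rw [this] at h1
          omega
      exact not231 hσ (show c < rs σ b from by rw [Fin.lt_def]; exact hcsb)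
        (show rs σ b < b from by rw [Fin.lt_def]; exact hsbb)
        (show σ b < σ c from by rw [Fin.lt_def]; omega)
        (show σ c < σ (rs σ b) from by
          rw [Fin.lt_def]
          have : σ (rs σ b) = Mx σ b := rfl
          rw [this]; omega)
    · -- b < sc
      push_neg at hbsc
      have hsbb : rs σ b ≤ b := rs_le σ b
      have hscc : (rs σ c).1 < c.1 := by
        have hle := rs_le σ c
        rw [Fin.le_def] at hle
        rcases lt_or_eq_of_le hle with h | h
        · exact h
        · exfalso
          have : rs σ c = c := Fin.ext h
          have : σ c = Mx σ c := by rw [Mx, this]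
          rw [this] at h1 h2
          omega
      have hMa : (Mx σ a).1 ≤ (Mx σ b).1 := by rw [← Fin.le_def]; exact hMab
      exact not231 hσ (show rs σ b < rs σ c from by
          rw [Fin.lt_def] at hbsc ⊢
          rw [Fin.le_def] at hsbb
          omega)
        (show rs σ c < c from by rw [Fin.lt_def]; exact hscc)
        (show σ c < σ (rs σ b) from by
          rw [Fin.lt_def]
          have : σ (rs σ b) = Mx σ b := rfl
          rw [this]; omega)
        (show σ (rs σ b) < σ (rs σ c) from by
          rw [Fin.lt_def]
          have e1 : σ (rs σ b) = Mx σ b := rfl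
          have e2 : σ (rs σ c) = Mx σ c := rfl
          rw [e1, e2]; omega)

theorem phi_exists' (σ : Equiv.Perm (Fin n)) (hσ : AvoidsPat (![1,2,0] : Fin 3 → Fin 3) σ) :
    ∃ τ : Equiv.Perm (Fin n), AvoidsPat (![2,0,1] : Fin 3 → Fin 3) τ ∧
      Destop τ = Destop σ ∧ Desbot τ = Desbot σ :=
  ⟨phi σ, phi_avoids σ hσ, destop_phi σ, desbot_phi σ⟩

end DDW


namespace DDW

section
variable {n : ℕ}

lemma contains_inv_iff (σ : Equiv.Perm (Fin n)) :
    Contains ![1, 2, 0] σ ↔ Contains ![2, 0, 1] σ⁻¹ := by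
  rw [contains231_iff, contains312_iff]
  constructor
  · rintro ⟨x, y, z, hxy, hyz, h1, h2⟩
    refine ⟨σ z, σ x, σ y, h1, h2, ?_, ?_⟩ <;> simp [hxy, hyz]
  · rintro ⟨x, y, z, hxy, hyz, h1, h2⟩
    refine ⟨σ⁻¹ y, σ⁻¹ z, σ⁻¹ x, h1, h2, ?_, ?_⟩ <;> simp [hxy, hyz]

lemma card_av_eq :
    ((Finset.univ : Finset (Equiv.Perm (Fin n))).filter
        (fun σ => AvoidsPat (![1, 2, 0] : Fin 3 → Fin 3) σ)).card =
      ((Finset.univ : Finset (Equiv.Perm (Fin n))).filter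
        (fun σ => AvoidsPat (![2, 0, 1] : Fin 3 → Fin 3) σ)).card := by
  apply Finset.card_bij (fun σ _ => σ⁻¹)
  · intro σ hσ
    simp only [Finset.mem_filter, Finset.mem_univ, true_and] at hσ ⊢
    exact fun hc => hσ ((contains_inv_iff σ).mpr hc)
  · intro a ha b hb hab
    exact inv_injective hab
  · intro τ hτ
    simp only [Finset.mem_filter, Finset.mem_univ, true_and] at hτ ⊢
    refine ⟨τ⁻¹, ?_, by simp⟩
    intro hc
    exact hτ (by simpa using (contains_inv_iff τ⁻¹).mp hc)

lemma destop_subset (σ : Equiv.Perm (Fin n)) : Destop σ ⊆ Finset.Icc 1 n := by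
  intro m hm
  obtain ⟨j, h, rfl, _⟩ := (mem_destop σ m).mp hm
  have := (σ j).isLt
  simp only [Finset.mem_Icc]; omega

lemma desbot_subset (σ : Equiv.Perm (Fin n)) : Desbot σ ⊆ Finset.Icc 1 n := by
  intro m hm
  obtain ⟨j, h, rfl, _⟩ := (mem_desbot σ m).mp hm
  have := (σ ⟨j.1+1, h⟩).isLt
  simp only [Finset.mem_Icc]; omega

end

end DDW


/-- The patterns 231 and 312 are (Destop, Desbot)-Wilf equivalent. -/
theorem destop_desbot_wilf_231_312 (n : ℕ) (T B : Finset ℕ)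
    (hT : T ⊆ Finset.Icc 1 n) (hB : B ⊆ Finset.Icc 1 n) :
    ((Finset.univ : Finset (Equiv.Perm (Fin n))).filter
        (fun σ => AvoidsPat (![1, 2, 0] : Fin 3 → Fin 3) σ ∧ Destop σ = T ∧ Desbot σ = B)).card =
      ((Finset.univ : Finset (Equiv.Perm (Fin n))).filter
        (fun σ => AvoidsPat (![2, 0, 1] : Fin 3 → Fin 3) σ ∧ Destop σ = T ∧ Desbot σ = B)).card := by
  classical
  set P : Finset (Finset ℕ × Finset ℕ) :=
    (Finset.Icc 1 n).powerset ×ˢ (Finset.Icc 1 n).powerset with hP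
  set L : Finset (Equiv.Perm (Fin n)) :=
    Finset.univ.filter (fun σ => AvoidsPat (![1, 2, 0] : Fin 3 → Fin 3) σ) with hL
  set R : Finset (Equiv.Perm (Fin n)) :=
    Finset.univ.filter (fun σ => AvoidsPat (![2, 0, 1] : Fin 3 → Fin 3) σ) with hR
  have hmapL : ∀ σ ∈ L, (Destop σ, Desbot σ) ∈ P := by
    intro σ _
    simp only [hP, Finset.mem_product, Finset.mem_powerset]
    exact ⟨DDW.destop_subset σ, DDW.desbot_subset σ⟩
  have hmapR : ∀ σ ∈ R, (Destop σ, Desbot σ) ∈ P := by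
    intro σ _
    simp only [hP, Finset.mem_product, Finset.mem_powerset]
    exact ⟨DDW.destop_subset σ, DDW.desbot_subset σ⟩
  have hLsum := Finset.card_eq_sum_card_fiberwise hmapL
  have hRsum := Finset.card_eq_sum_card_fiberwise hmapR
  have hcard : L.card = R.card := DDW.card_av_eq
  have hle : ∀ p ∈ P, (L.filter (fun σ => (Destop σ, Desbot σ) = p)).card ≤
      (R.filter (fun σ => (Destop σ, Desbot σ) = p)).card := by
    intro p _
    rcases (L.filter (fun σ => (Destop σ, Desbot σ) = p)).eq_empty_or_nonempty with he | ⟨σ, hσ⟩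
    · simp [he]
    · have hone : (L.filter (fun σ => (Destop σ, Desbot σ) = p)).card ≤ 1 := by
        apply Finset.card_le_one.mpr
        intro a ha b hb
        simp only [hL, Finset.mem_filter, Finset.mem_univ, true_and] at ha hb
        have hob := ha.2.trans hb.2.symm
        rw [Prod.mk.injEq] at hob
        exact DDW.uniq231' a b ha.1 hb.1 hob.1 hob.2
      simp only [hL, Finset.mem_filter, Finset.mem_univ, true_and] at hσ
      obtain ⟨τ, hτav, hτt, hτb⟩ := DDW.phi_exists' σ hσ.1
      have : τ ∈ R.filter (fun σ => (Destop σ, Desbot σ) = p) := by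
        simp only [hR, Finset.mem_filter, Finset.mem_univ, true_and]
        exact ⟨hτav, by rw [Prod.ext_iff] at hσ ⊢; exact ⟨hτt.trans hσ.2.1, hτb.trans hσ.2.2⟩⟩
      calc (L.filter (fun σ => (Destop σ, Desbot σ) = p)).card ≤ 1 := hone
        _ ≤ _ := Finset.card_pos.mpr ⟨τ, this⟩
  have heq : ∀ p ∈ P, (L.filter (fun σ => (Destop σ, Desbot σ) = p)).card =
      (R.filter (fun σ => (Destop σ, Desbot σ) = p)).card := by
    exact (Finset.sum_eq_sum_iff_of_le hle).mp (by rw [← hLsum, ← hRsum]; exact hcard)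
  have hTB : (T, B) ∈ P := by
    simp only [hP, Finset.mem_product, Finset.mem_powerset]
    exact ⟨hT, hB⟩
  have := heq (T, B) hTB
  have el : Finset.univ.filter
      (fun σ : Equiv.Perm (Fin n) => AvoidsPat (![1, 2, 0] : Fin 3 → Fin 3) σ ∧ Destop σ = T ∧ Desbot σ = B) =
      L.filter (fun σ => (Destop σ, Desbot σ) = (T, B)) := by
    rw [hL, Finset.filter_filter]
    apply Finset.filter_congr
    intro σ _
    simp [Prod.ext_iff, and_assoc]
  have er : Finset.univ.filter
      (fun σ : Equiv.Perm (Fin n) => AvoidsPat (![2, 0, 1] : Fin 3 → Fin 3) σ ∧ Destop σ = T ∧ Desbot σ = B) =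
      R.filter (fun σ => (Destop σ, Desbot σ) = (T, B)) := by
    rw [hR, Finset.filter_filter]
    apply Finset.filter_congr
    intro σ _
    simp [Prod.ext_iff, and_assoc]
  rw [el, er, this]
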